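/- Let w ∈ Δ be an equilibrium of the vector field F which is unstable, i.e. there exists an index i with w_i = 0 and ∂L/∂v_i(w) > 0. Then for the graph-based Pólya urn on G, the probability that x(n) converges to w as n → ∞ is zero. -/

import Mathlib

open MeasureTheory Filter Finset

/-- `v_i + v_j` as a function of the unordered pair `{i,j}`. -/
noncomputable def pairSum {m : ℕ} (v : Fin m → ℝ) : Sym2 (Fin m) → ℝ :=
  Sym2.lift ⟨fun i j => v i + v j, fun i j => add_comm (v i) (v j)⟩

/-- The domain `Δ`: nonnegative vectors summing to `1` with `v_i + v_j ≥ c` on every edge. -/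
def urnDomain {m : ℕ} (G : SimpleGraph (Fin m)) (c : ℝ) : Set (Fin m → ℝ) :=
  {v | (∀ i, 0 ≤ v i) ∧ (∑ i, v i) = 1 ∧ ∀ i j, G.Adj i j → c ≤ v i + v j}

/-- `∂L/∂v_i (v) = -1 + (1/N) Σ_{j ∼ i} 1/(v_i + v_j)`. -/
noncomputable def dLyap {m : ℕ} (G : SimpleGraph (Fin m)) [DecidableRel G.Adj] (N : ℕ)
    (i : Fin m) (v : Fin m → ℝ) : ℝ :=
  -1 + (1 / (N : ℝ)) * ∑ j ∈ G.neighborFinset i, 1 / (v i + v j)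

/-- The set of non-unstable equilibria of the vector field `F_i(v) = v_i ∂L/∂v_i(v)`. -/
def nonUnstableEquilibria {m : ℕ} (G : SimpleGraph (Fin m)) [DecidableRel G.Adj]
    (N : ℕ) (c : ℝ) : Set (Fin m → ℝ) :=
  {w ∈ urnDomain G c | (∀ i, w i * dLyap G N i w = 0) ∧
    (∀ i, 0 < w i → dLyap G N i w = 0) ∧ (∀ i, w i = 0 → dLyap G N i w ≤ 0)}

lemma pairSum_mk {m : ℕ} (v : Fin m → ℝ) (a b : Fin m) : pairSum v s(a, b) = v a + v b := rfl

lemma aux_inv_drop {b Δ Nr : ℝ} (hb : 1 ≤ b) (hΔ : 0 ≤ Δ) (hΔN : Δ ≤ Nr) :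
    (b + Δ)⁻¹ ≤ b⁻¹ - Δ / (b * (b + Nr)) := by
  have hb0 : 0 < b := by linarith
  have h1 : 0 < b + Δ := by linarith
  have h2 : 0 < b + Nr := by linarith
  have key : (b + Δ)⁻¹ = b⁻¹ - Δ / (b * (b + Δ)) := by field_simp; ring
  rw [key]
  have : Δ / (b * (b + Nr)) ≤ Δ / (b * (b + Δ)) := by
    apply div_le_div_of_nonneg_left hΔ (by positivity)
    nlinarith
  linarith

lemma aux_ae_sum {Ω : Type} [MeasurableSpace Ω] (μ : Measure Ω) {ι : Type*} (s : Finset ι)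
    (f g : ι → Ω → ℝ) (h : ∀ i ∈ s, f i =ᵐ[μ] g i) :
    (fun ω => ∑ i ∈ s, f i ω) =ᵐ[μ] (fun ω => ∑ i ∈ s, g i ω) := by
  classical
  induction s using Finset.induction with
  | empty => simp
  | insert a s hni ih =>
    rw [show (fun ω => ∑ i ∈ insert a s, f i ω) = fun ω => f a ω + ∑ i ∈ s, f i ω from
      funext fun ω => Finset.sum_insert hni,
      show (fun ω => ∑ i ∈ insert a s, g i ω) = fun ω => g a ω + ∑ i ∈ s, g i ω from
      funext fun ω => Finset.sum_insert hni]
    exact (h a (mem_insert_self a s)).add (ih fun i hi => h i (mem_insert_of_mem hi))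

lemma urn_drift
    {m : ℕ} (G : SimpleGraph (Fin m)) [DecidableRel G.Adj]
    (N : ℕ) (hN : N = G.edgeFinset.card)
    {Ω : Type} [MeasurableSpace Ω] (μ : Measure Ω) [IsProbabilityMeasure μ]
    (choice : ℕ → Sym2 (Fin m) → Ω → Fin m)
    (hmeas : ∀ n e, Measurable (choice n e))
    (hmem : ∀ n e ω, e ∈ G.edgeFinset → choice n e ω ∈ e)
    (B : ℕ → Fin m → Ω → ℕ)
    (hB1 : ∀ n j ω, 1 ≤ B n j ω)
    (hBrec : ∀ n i ω, B (n + 1) i ω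
      = B n i ω + (G.edgeFinset.filter fun e => choice (n + 1) e ω = i).card)
    (ℱ : ℕ → MeasurableSpace Ω)
    (hFle : ∀ n, ℱ n ≤ ‹MeasurableSpace Ω›)
    (hBF : ∀ n j, Measurable[ℱ n] (fun ω => B n j ω))
    (hlaw : ∀ (n : ℕ) (f : Sym2 (Fin m) → Fin m), (∀ e ∈ G.edgeFinset, f e ∈ e) →
      μ[Set.indicator {ω | ∀ e ∈ G.edgeFinset, choice (n + 1) e ω = f e} (fun _ => (1 : ℝ)) | ℱ n]
        =ᵐ[μ] fun ω => ∏ e ∈ G.edgeFinset,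
          (B n (f e) ω : ℝ) / pairSum (fun i => (B n i ω : ℝ)) e)
    (i : Fin m) (n : ℕ) :
    ∀ᵐ ω ∂μ, (μ[(fun ω' => ((B (n+1) i ω' : ℝ))⁻¹) | ℱ n]) ω
      ≤ ((B n i ω : ℝ))⁻¹ - (∑ e ∈ G.edgeFinset.filter (fun e => i ∈ e),
          (pairSum (fun j => (B n j ω : ℝ)) e)⁻¹) / ((B n i ω : ℝ) + N) := by
  classical
  set t : Sym2 (Fin m) → Finset (Fin m) :=
    fun e => if e ∈ G.edgeFinset then Finset.univ.filter (· ∈ e) else {i} with ht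
  set S : Finset (Sym2 (Fin m) → Fin m) := Fintype.piFinset t with hSdef
  set P : Ω → Sym2 (Fin m) → Fin m → ℝ :=
    fun ω e v => (B n v ω : ℝ) / pairSum (fun j => (B n j ω : ℝ)) e with hPdef
  set D : (Sym2 (Fin m) → Fin m) → ℕ := fun f => (G.edgeFinset.filter fun e => f e = i).card
    with hDdef
  set Es : (Sym2 (Fin m) → Fin m) → Set Ω :=
    fun f => {ω | ∀ e ∈ G.edgeFinset, choice (n+1) e ω = f e} with hEsdef
  -- basic facts
  have hBpos : ∀ j ω, (0:ℝ) < (B n j ω : ℝ) := fun j ω => by exact_mod_cast hB1 n j ω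
  have hpairpos : ∀ (ω : Ω) (e : Sym2 (Fin m)), e ∈ G.edgeFinset →
      0 < pairSum (fun j => (B n j ω : ℝ)) e := by
    intro ω e he
    induction e using Sym2.inductionOn with
    | hf a b => rw [pairSum_mk]; have := hBpos a ω; have := hBpos b ω; linarith
  have hmemF : ∀ f ∈ S, ∀ e ∈ G.edgeFinset, f e ∈ e := by
    intro f hf e he
    have := (Fintype.mem_piFinset.mp hf) e
    rw [ht] at this
    simp only [if_pos he, Finset.mem_filter] at this
    exact this.2
  have hoff : ∀ f ∈ S, ∀ e, e ∉ G.edgeFinset → f e = i := by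
    intro f hf e he
    have := (Fintype.mem_piFinset.mp hf) e
    simp only [ht, if_neg he, Finset.mem_singleton] at this
    exact this
  -- the marginalization identity
  have hmarg : ∀ (q : Sym2 (Fin m) → Fin m → ℝ),
      ∑ f ∈ S, ∏ e ∈ G.edgeFinset, q e (f e)
        = ∏ e ∈ G.edgeFinset, ∑ v ∈ Finset.univ.filter (· ∈ e), q e v := by
    intro q
    have key := Finset.prod_univ_sum t
      (fun e v => if e ∈ G.edgeFinset then q e v else 1)
    calc ∑ f ∈ S, ∏ e ∈ G.edgeFinset, q e (f e)
        = ∑ f ∈ S, ∏ e : Sym2 (Fin m), (if e ∈ G.edgeFinset then q e (f e) else 1) := by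
          refine Finset.sum_congr rfl fun f _ => ?_
          rw [← Finset.prod_subset (Finset.subset_univ G.edgeFinset)
            (fun e _ he => if_neg he)]
          exact Finset.prod_congr rfl fun e he => (if_pos he).symm
      _ = ∏ e : Sym2 (Fin m), ∑ v ∈ t e, (if e ∈ G.edgeFinset then q e v else 1) := key.symm
      _ = ∏ e ∈ G.edgeFinset, ∑ v ∈ t e, (if e ∈ G.edgeFinset then q e v else 1) :=
          (Finset.prod_subset (Finset.subset_univ _) (fun e _ he => by
            rw [ht]; simp only [if_neg he, Finset.sum_singleton])).symm
      _ = ∏ e ∈ G.edgeFinset, ∑ v ∈ Finset.univ.filter (· ∈ e), q e v :=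
          Finset.prod_congr rfl fun e he => by
            rw [ht]; simp only [if_pos he]
  -- sum of transition probabilities over an edge is 1
  have hsum1 : ∀ (ω : Ω), ∀ e ∈ G.edgeFinset,
      ∑ v ∈ Finset.univ.filter (· ∈ e), P ω e v = 1 := by
    intro ω e he
    induction e using Sym2.inductionOn with
    | hf a b =>
      have hadj : G.Adj a b := by
        rw [SimpleGraph.mem_edgeFinset, SimpleGraph.mem_edgeSet] at he
        exact he
      have hab : a ≠ b := G.ne_of_adj hadj
      have hfilt : Finset.univ.filter (· ∈ s(a, b)) = {a, b} := by
        ext v; simp [Sym2.mem_iff]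
      rw [hfilt, Finset.sum_pair hab]
      have hp : (0:ℝ) < pairSum (fun j => (B n j ω : ℝ)) s(a, b) :=
        hpairpos ω _ he
      rw [hPdef]
      simp only
      rw [← add_div, pairSum_mk]
      rw [pairSum_mk] at hp
      field_simp
  have hPnonneg : ∀ (ω : Ω), ∀ e ∈ G.edgeFinset, ∀ v, 0 ≤ P ω e v := by
    intro ω e he v
    exact div_nonneg (Nat.cast_nonneg _) (le_of_lt (hpairpos ω e he))
  have htot : ∀ ω, ∑ f ∈ S, ∏ e ∈ G.edgeFinset, P ω e (f e) = 1 := by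
    intro ω
    rw [hmarg (P ω), Finset.prod_congr rfl (fun e he => hsum1 ω e he), Finset.prod_const_one]
  have hmom : ∀ ω, ∑ f ∈ S, (D f : ℝ) * ∏ e ∈ G.edgeFinset, P ω e (f e)
      = (∑ e ∈ G.edgeFinset.filter (fun e => i ∈ e),
          (pairSum (fun j => (B n j ω : ℝ)) e)⁻¹) * (B n i ω : ℝ) := by
    intro ω
    have hD' : ∀ f : Sym2 (Fin m) → Fin m,
        (D f : ℝ) = ∑ e0 ∈ G.edgeFinset, (if f e0 = i then (1:ℝ) else 0) := by
      intro f
      rw [hDdef]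
      simp only
      rw [Finset.card_filter]
      push_cast
      rfl
    have main : ∑ f ∈ S, (D f : ℝ) * ∏ e ∈ G.edgeFinset, P ω e (f e)
        = ∑ e0 ∈ G.edgeFinset, (if i ∈ e0 then P ω e0 i else 0) := by
      calc ∑ f ∈ S, (D f : ℝ) * ∏ e ∈ G.edgeFinset, P ω e (f e)
          = ∑ f ∈ S, ∑ e0 ∈ G.edgeFinset,
              (if f e0 = i then (1:ℝ) else 0) * ∏ e ∈ G.edgeFinset, P ω e (f e) := by
            refine Finset.sum_congr rfl fun f _ => ?_
            rw [hD' f, Finset.sum_mul]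
        _ = ∑ e0 ∈ G.edgeFinset, ∑ f ∈ S,
              (if f e0 = i then (1:ℝ) else 0) * ∏ e ∈ G.edgeFinset, P ω e (f e) :=
            Finset.sum_comm
        _ = ∑ e0 ∈ G.edgeFinset, (if i ∈ e0 then P ω e0 i else 0) := by
            refine Finset.sum_congr rfl fun e0 he0 => ?_
            have hq : ∀ f : Sym2 (Fin m) → Fin m,
                (if f e0 = i then (1:ℝ) else 0) * ∏ e ∈ G.edgeFinset, P ω e (f e)
                = ∏ e ∈ G.edgeFinset,
                    (if e = e0 then (if f e = i then P ω e (f e) else 0) else P ω e (f e)) := by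
              intro f
              have h1 : ∏ e ∈ G.edgeFinset,
                  (if e = e0 then (if f e = i then P ω e (f e) else 0) else P ω e (f e))
                  = (if f e0 = i then P ω e0 (f e0) else 0) *
                    ∏ e ∈ G.edgeFinset.erase e0, P ω e (f e) := by
                rw [← Finset.mul_prod_erase _ _ he0, if_pos rfl]
                congr 1
                refine Finset.prod_congr rfl fun e he => ?_
                rw [if_neg (Finset.ne_of_mem_erase he)]
              rw [h1, ← Finset.mul_prod_erase _ (fun e => P ω e (f e)) he0, ← mul_assoc]
              congr 1
              by_cases hfi : f e0 = i
              · rw [if_pos hfi, if_pos hfi, one_mul]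
              · rw [if_neg hfi, if_neg hfi, zero_mul]
            refine (Finset.sum_congr rfl (fun f _ => hq f)).trans
              ((hmarg (fun e v => if e = e0 then (if v = i then P ω e v else 0) else P ω e v)).trans ?_)
            have hother : ∀ e ∈ G.edgeFinset, e ≠ e0 →
                (∑ v ∈ Finset.univ.filter (· ∈ e),
                  if e = e0 then (if v = i then P ω e v else 0) else P ω e v) = 1 := by
              intro e he hne
              rw [Finset.sum_congr rfl fun v _ => if_neg hne]
              exact hsum1 ω e he
            rw [Finset.prod_eq_single_of_mem e0 he0 hother]
            have hdiag : (∑ v ∈ Finset.univ.filter (· ∈ e0),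
                if e0 = e0 then (if v = i then P ω e0 v else 0) else P ω e0 v)
                = ∑ v ∈ Finset.univ.filter (· ∈ e0), (if v = i then P ω e0 v else 0) :=
              Finset.sum_congr rfl fun v _ => if_pos rfl
            rw [hdiag, Finset.sum_ite_eq' (Finset.univ.filter (· ∈ e0)) i (fun v => P ω e0 v)]
            simp only [Finset.mem_filter, Finset.mem_univ, true_and]
    rw [main, ← Finset.sum_filter, Finset.sum_mul]
    refine Finset.sum_congr rfl fun e he => ?_
    rw [hPdef]
    simp only
    rw [div_eq_mul_inv, mul_comm]
  -- pointwise decomposition of 1/B_{n+1}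
  have hptw : ∀ ω, ((B (n+1) i ω : ℝ))⁻¹
      = ∑ f ∈ S, ((B n i ω : ℝ) + (D f : ℝ))⁻¹ * Set.indicator (Es f) (fun _ => (1:ℝ)) ω := by
    intro ω
    set f0 : Sym2 (Fin m) → Fin m :=
      fun e => if e ∈ G.edgeFinset then choice (n+1) e ω else i with hf0
    have hf0S : f0 ∈ S := by
      rw [hSdef, Fintype.mem_piFinset]
      intro e
      rw [ht, hf0]
      by_cases he : e ∈ G.edgeFinset
      · simp only [if_pos he, Finset.mem_filter, Finset.mem_univ, true_and]
        exact hmem (n+1) e ω he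
      · simp only [if_neg he, Finset.mem_singleton]
    rw [Finset.sum_eq_single_of_mem f0 hf0S (fun f hf hne => ?_)]
    · have hω : ω ∈ Es f0 := by
        rw [hEsdef]
        intro e he
        rw [hf0]
        simp only [if_pos he]
      rw [Set.indicator_of_mem hω, mul_one]
      congr 1
      rw [hBrec n i ω]
      push_cast
      congr 2
      rw [hDdef]
      simp only
      congr 1
      refine Finset.filter_congr fun e he => ?_
      rw [hf0]
      simp only [if_pos he]
    · rw [Set.indicator_of_notMem, mul_zero]
      intro hωf
      apply hne
      funext e
      by_cases he : e ∈ G.edgeFinset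
      · rw [hf0]
        simp only [if_pos he]
        exact (hωf e he).symm
      · rw [hoff f hf e he, hf0]
        simp only [if_neg he]
  -- measurability and integrability
  have hEsMeas : ∀ f : Sym2 (Fin m) → Fin m, MeasurableSet (Es f) := by
    intro f
    have heq : Es f = ⋂ e ∈ G.edgeFinset, (choice (n+1) e) ⁻¹' {f e} := by
      ext ω
      simp only [hEsdef, Set.mem_setOf_eq, Set.mem_iInter, Set.mem_preimage,
        Set.mem_singleton_iff]
    rw [heq]
    exact MeasurableSet.biInter (Set.to_countable _)
      (fun e _ => (hmeas (n+1) e) (measurableSet_singleton _))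
  have hIndInt : ∀ f : Sym2 (Fin m) → Fin m,
      Integrable (Set.indicator (Es f) (fun _ => (1:ℝ))) μ :=
    fun f => (integrable_const (1:ℝ)).indicator (hEsMeas f)
  have hcastF : Measurable[ℱ n] (fun ω => (B n i ω : ℝ)) :=
    (measurable_from_top (f := (Nat.cast : ℕ → ℝ))).comp (hBF n i)
  have hφmeasF : ∀ f : Sym2 (Fin m) → Fin m,
      StronglyMeasurable[ℱ n] (fun ω => ((B n i ω : ℝ) + (D f : ℝ))⁻¹) :=
    fun f => ((hcastF.add_const _).inv).stronglyMeasurable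
  have hφmeas : ∀ f : Sym2 (Fin m) → Fin m,
      Measurable (fun ω => ((B n i ω : ℝ) + (D f : ℝ))⁻¹) :=
    fun f => ((hcastF.add_const _).inv).mono (hFle n) le_rfl
  have hφbd : ∀ (f : Sym2 (Fin m) → Fin m) (ω : Ω),
      0 ≤ ((B n i ω : ℝ) + (D f : ℝ))⁻¹ ∧ ((B n i ω : ℝ) + (D f : ℝ))⁻¹ ≤ 1 := by
    intro f ω
    have h1 : (1:ℝ) ≤ (B n i ω : ℝ) + (D f : ℝ) := by
      have := hBpos i ω
      have h2 : (1:ℝ) ≤ (B n i ω : ℝ) := by exact_mod_cast hB1 n i ω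
      have h3 : (0:ℝ) ≤ (D f : ℝ) := Nat.cast_nonneg _
      linarith
    constructor
    · positivity
    · rw [inv_le_one_iff₀]
      right
      exact h1
  have hprod_int : ∀ f : Sym2 (Fin m) → Fin m,
      Integrable (fun ω => ((B n i ω:ℝ)+(D f:ℝ))⁻¹
        * Set.indicator (Es f) (fun _ => (1:ℝ)) ω) μ := by
    intro f
    refine Integrable.mono' (integrable_const (1:ℝ))
      (((hφmeas f).mul ((measurable_const (a := (1:ℝ))).indicator
        (hEsMeas f))).aestronglyMeasurable) (ae_of_all _ fun ω => ?_)
    have hind : (0:ℝ) ≤ Set.indicator (Es f) (fun _ => (1:ℝ)) ω ∧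
        Set.indicator (Es f) (fun _ => (1:ℝ)) ω ≤ 1 := by
      by_cases hω : ω ∈ Es f
      · rw [Set.indicator_of_mem hω]; exact ⟨zero_le_one, le_refl 1⟩
      · rw [Set.indicator_of_notMem hω]; exact ⟨le_refl 0, zero_le_one⟩
    rw [Real.norm_eq_abs, abs_of_nonneg (mul_nonneg (hφbd f ω).1 hind.1)]
    exact mul_le_one₀ (hφbd f ω).2 hind.1 hind.2
  -- the conditional expectation computation
  have hcond : μ[(fun ω' => ((B (n+1) i ω' : ℝ))⁻¹)|ℱ n]
      =ᵐ[μ] fun ω => ∑ f ∈ S, ((B n i ω:ℝ)+(D f:ℝ))⁻¹ * ∏ e ∈ G.edgeFinset, P ω e (f e) := by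
    have h0 : (fun ω' => ((B (n+1) i ω' : ℝ))⁻¹)
        = ∑ f ∈ S, (fun ω' => ((B n i ω':ℝ)+(D f:ℝ))⁻¹
            * Set.indicator (Es f) (fun _ => (1:ℝ)) ω') := by
      funext ω
      rw [Finset.sum_apply]
      exact hptw ω
    rw [h0]
    refine (condExp_finset_sum (fun f _ => hprod_int f) (ℱ n)).trans ?_
    have h2 : ∀ f ∈ S, μ[(fun ω' => ((B n i ω':ℝ)+(D f:ℝ))⁻¹
          * Set.indicator (Es f) (fun _ => (1:ℝ)) ω')|ℱ n]
        =ᵐ[μ] fun ω => ((B n i ω:ℝ)+(D f:ℝ))⁻¹ * ∏ e ∈ G.edgeFinset, P ω e (f e) := by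
      intro f hf
      have hmul := condExp_mul_of_stronglyMeasurable_left (μ := μ) (hφmeasF f)
        (hprod_int f) (hIndInt f)
      refine hmul.trans ?_
      have hlawf := hlaw n f (hmemF f hf)
      exact (EventuallyEq.refl _ (fun ω => ((B n i ω:ℝ)+(D f:ℝ))⁻¹)).mul hlawf
    have h3 := aux_ae_sum μ S
      (fun f => μ[(fun ω' => ((B n i ω':ℝ)+(D f:ℝ))⁻¹
          * Set.indicator (Es f) (fun _ => (1:ℝ)) ω')|ℱ n])
      (fun f ω => ((B n i ω:ℝ)+(D f:ℝ))⁻¹ * ∏ e ∈ G.edgeFinset, P ω e (f e)) h2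
    refine EventuallyEq.trans ?_ h3
    apply Filter.EventuallyEq.of_eq
    funext ω
    rw [Finset.sum_apply]
  -- the pointwise bound
  have hbound : ∀ ω, ∑ f ∈ S, ((B n i ω:ℝ)+(D f:ℝ))⁻¹ * ∏ e ∈ G.edgeFinset, P ω e (f e)
      ≤ ((B n i ω : ℝ))⁻¹ - (∑ e ∈ G.edgeFinset.filter (fun e => i ∈ e),
          (pairSum (fun j => (B n j ω : ℝ)) e)⁻¹) / ((B n i ω : ℝ) + N) := by
    intro ω
    have hb1 : (1:ℝ) ≤ (B n i ω : ℝ) := by exact_mod_cast hB1 n i ω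
    have hb0 : (0:ℝ) < (B n i ω : ℝ) := lt_of_lt_of_le zero_lt_one hb1
    have hprodnn : ∀ f ∈ S, 0 ≤ ∏ e ∈ G.edgeFinset, P ω e (f e) :=
      fun f _ => Finset.prod_nonneg fun e he => hPnonneg ω e he (f e)
    have step1 : ∑ f ∈ S, ((B n i ω:ℝ) + (D f:ℝ))⁻¹ * ∏ e ∈ G.edgeFinset, P ω e (f e)
        ≤ ∑ f ∈ S, (((B n i ω:ℝ))⁻¹ - (D f:ℝ)/((B n i ω:ℝ)*((B n i ω:ℝ)+N)))
            * ∏ e ∈ G.edgeFinset, P ω e (f e) := by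
      refine Finset.sum_le_sum fun f hf => mul_le_mul_of_nonneg_right ?_ (hprodnn f hf)
      refine aux_inv_drop hb1 (Nat.cast_nonneg _) ?_
      have hDN : D f ≤ N := by
        rw [hN, hDdef]
        exact Finset.card_filter_le _ _
      exact_mod_cast hDN
    have step2 : ∑ f ∈ S, (((B n i ω:ℝ))⁻¹ - (D f:ℝ)/((B n i ω:ℝ)*((B n i ω:ℝ)+N)))
            * ∏ e ∈ G.edgeFinset, P ω e (f e)
        = ((B n i ω:ℝ))⁻¹ - ((∑ e ∈ G.edgeFinset.filter (fun e => i ∈ e),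
            (pairSum (fun j => (B n j ω : ℝ)) e)⁻¹) * (B n i ω:ℝ))
              / ((B n i ω:ℝ)*((B n i ω:ℝ)+N)) := by
      have expand : ∀ f : Sym2 (Fin m) → Fin m,
          (((B n i ω:ℝ))⁻¹ - (D f:ℝ)/((B n i ω:ℝ)*((B n i ω:ℝ)+N)))
            * ∏ e ∈ G.edgeFinset, P ω e (f e)
          = ((B n i ω:ℝ))⁻¹ * ∏ e ∈ G.edgeFinset, P ω e (f e)
            - ((B n i ω:ℝ)*((B n i ω:ℝ)+N))⁻¹
              * ((D f:ℝ) * ∏ e ∈ G.edgeFinset, P ω e (f e)) := by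
        intro f
        rw [div_eq_mul_inv]
        ring
      rw [Finset.sum_congr rfl fun f _ => expand f, Finset.sum_sub_distrib,
        ← Finset.mul_sum, ← Finset.mul_sum, htot ω, hmom ω, mul_one, div_eq_mul_inv,
        mul_comm (((B n i ω:ℝ))*((B n i ω:ℝ)+N))⁻¹]
    have step3 : ((∑ e ∈ G.edgeFinset.filter (fun e => i ∈ e),
            (pairSum (fun j => (B n j ω : ℝ)) e)⁻¹) * (B n i ω:ℝ))
              / ((B n i ω:ℝ)*((B n i ω:ℝ)+N))
        = (∑ e ∈ G.edgeFinset.filter (fun e => i ∈ e),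
            (pairSum (fun j => (B n j ω : ℝ)) e)⁻¹) / ((B n i ω:ℝ)+N) := by
      have hbN : (0:ℝ) < (B n i ω:ℝ) + N := by positivity
      field_simp
    rw [step3] at step2
    exact step1.trans_eq step2
  filter_upwards [hcond] with ω hω
  rw [hω]
  exact hbound ω

lemma urn_key
    {m : ℕ} (G : SimpleGraph (Fin m)) [DecidableRel G.Adj]
    (N : ℕ) (hN : N = G.edgeFinset.card)
    {Ω : Type} [MeasurableSpace Ω] (μ : Measure Ω) [IsProbabilityMeasure μ]
    (choice : ℕ → Sym2 (Fin m) → Ω → Fin m)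
    (hmeas : ∀ n e, Measurable (choice n e))
    (hmem : ∀ n e ω, e ∈ G.edgeFinset → choice n e ω ∈ e)
    (B : ℕ → Fin m → Ω → ℕ)
    (hB1 : ∀ n j ω, 1 ≤ B n j ω)
    (hBrec : ∀ n i ω, B (n + 1) i ω
      = B n i ω + (G.edgeFinset.filter fun e => choice (n + 1) e ω = i).card)
    (ℱ : ℕ → MeasurableSpace Ω)
    (hFle : ∀ n, ℱ n ≤ ‹MeasurableSpace Ω›)
    (hFmono : Monotone ℱ)
    (hBF : ∀ n j, Measurable[ℱ n] (fun ω => B n j ω))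
    (hlaw : ∀ (n : ℕ) (f : Sym2 (Fin m) → Fin m), (∀ e ∈ G.edgeFinset, f e ∈ e) →
      μ[Set.indicator {ω | ∀ e ∈ G.edgeFinset, choice (n + 1) e ω = f e} (fun _ => (1 : ℝ)) | ℱ n]
        =ᵐ[μ] fun ω => ∏ e ∈ G.edgeFinset,
          (B n (f e) ω : ℝ) / pairSum (fun i => (B n i ω : ℝ)) e)
    (i : Fin m) (n0 : ℕ) (K : ℕ) (hK : 1 ≤ K)
    (Lk : ℕ → ℝ) (hLk0 : ∀ k, 0 ≤ Lk k)
    (hcap : ∀ k, n0 ≤ k → (K:ℝ)/((K:ℝ)+(N:ℝ)) * Lk k ≤ 1) :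
    ∀ n, n0 ≤ n →
      ∫ ω in {ω | K ≤ B n0 i ω ∧ ∀ k, n0 ≤ k → k ≤ n →
          Lk k ≤ ∑ e ∈ G.edgeFinset.filter (fun e => i ∈ e),
            (pairSum (fun j => (B k j ω : ℝ)) e)⁻¹}, ((B n i ω : ℝ))⁻¹ ∂μ
        ≤ ∏ k ∈ Finset.Ico n0 n, (1 - (K:ℝ)/((K:ℝ)+(N:ℝ)) * Lk k) := by
  classical
  set ρ : ℕ → ℝ := fun k => (K:ℝ)/((K:ℝ)+(N:ℝ)) * Lk k with hρ
  set Gset : ℕ → Set Ω := fun n => {ω | K ≤ B n0 i ω ∧ ∀ k, n0 ≤ k → k ≤ n →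
      Lk k ≤ ∑ e ∈ G.edgeFinset.filter (fun e => i ∈ e),
        (pairSum (fun j => (B k j ω : ℝ)) e)⁻¹} with hGdef
  have hBmono : ∀ j ω, Monotone fun n => B n j ω := by
    intro j ω
    refine monotone_nat_of_le_succ fun n => ?_
    rw [hBrec n j ω]
    exact Nat.le_add_right _ _
  -- measurability of the running sums
  have hcastmeas : ∀ (k : ℕ) (j : Fin m), Measurable[ℱ k] (fun ω => (B k j ω : ℝ)) :=
    fun k j => (measurable_from_top (f := (Nat.cast : ℕ → ℝ))).comp (hBF k j)
  have hpairmeas : ∀ (k : ℕ) (e : Sym2 (Fin m)),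
      Measurable[ℱ k] (fun ω => pairSum (fun j => (B k j ω : ℝ)) e) := by
    intro k e
    induction e using Sym2.inductionOn with
    | hf a b =>
      have heq : (fun ω => pairSum (fun j => (B k j ω : ℝ)) s(a,b))
          = fun ω => (B k a ω : ℝ) + (B k b ω : ℝ) :=
        funext fun ω => pairSum_mk _ a b
      rw [heq]
      exact (hcastmeas k a).add (hcastmeas k b)
  have hSmeas : ∀ (k : ℕ), Measurable[ℱ k] (fun ω =>
      ∑ e ∈ G.edgeFinset.filter (fun e => i ∈ e),
        (pairSum (fun j => (B k j ω : ℝ)) e)⁻¹) := by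
    intro k
    refine Finset.measurable_sum _ fun e _ => ?_
    exact (hpairmeas k e).inv
  have hGm : ∀ n, n0 ≤ n → MeasurableSet[ℱ n] (Gset n) := by
    intro n hn
    have hGeq : Gset n = {ω | K ≤ B n0 i ω} ∩ ⋂ (k : ℕ), {ω | n0 ≤ k → k ≤ n →
        Lk k ≤ ∑ e ∈ G.edgeFinset.filter (fun e => i ∈ e),
          (pairSum (fun j => (B k j ω : ℝ)) e)⁻¹} := by
      rw [hGdef]
      ext ω
      simp only [Set.mem_setOf_eq, Set.mem_inter_iff, Set.mem_iInter]
    rw [hGeq]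
    refine MeasurableSet.inter ?_ (MeasurableSet.iInter fun k => ?_)
    · have h0 := (hBF n0 i) (show MeasurableSet (Set.Ici K) from trivial)
      exact (hFmono hn) _ h0
    · by_cases hk : n0 ≤ k ∧ k ≤ n
      · have heq : {ω | n0 ≤ k → k ≤ n →
            Lk k ≤ ∑ e ∈ G.edgeFinset.filter (fun e => i ∈ e),
              (pairSum (fun j => (B k j ω : ℝ)) e)⁻¹}
            = {ω | Lk k ≤ ∑ e ∈ G.edgeFinset.filter (fun e => i ∈ e),
              (pairSum (fun j => (B k j ω : ℝ)) e)⁻¹} := by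
          ext ω; simp [hk.1, hk.2]
        rw [heq]
        have hm := measurableSet_le (measurable_const (a := Lk k))
          ((hSmeas k).mono (hFmono hk.2) le_rfl)
        exact hm
      · have heq : {ω | n0 ≤ k → k ≤ n →
            Lk k ≤ ∑ e ∈ G.edgeFinset.filter (fun e => i ∈ e),
              (pairSum (fun j => (B k j ω : ℝ)) e)⁻¹} = Set.univ := by
          ext ω
          simp only [Set.mem_setOf_eq, Set.mem_univ, iff_true]
          intro h1 h2
          exact absurd ⟨h1, h2⟩ hk
        rw [heq]
        exact MeasurableSet.univ
  -- integrability of 1/B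
  have hYmeas : ∀ n', Measurable (fun ω => ((B n' i ω : ℝ))⁻¹) :=
    fun n' => ((measurable_from_top (f := (Nat.cast : ℕ → ℝ))).comp
      ((hBF n' i).mono (hFle n') le_rfl)).inv
  have hYbd : ∀ n' ω, 0 ≤ ((B n' i ω : ℝ))⁻¹ ∧ ((B n' i ω : ℝ))⁻¹ ≤ 1 := by
    intro n' ω
    have h1 : (1:ℝ) ≤ (B n' i ω : ℝ) := by exact_mod_cast hB1 n' i ω
    constructor
    · positivity
    · rw [inv_le_one_iff₀]; right; exact h1
  have hYint : ∀ n', Integrable (fun ω => ((B n' i ω : ℝ))⁻¹) μ := by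
    intro n'
    refine Integrable.mono' (integrable_const (1:ℝ)) (hYmeas n').aestronglyMeasurable
      (ae_of_all _ fun ω => ?_)
    rw [Real.norm_eq_abs, abs_of_nonneg (hYbd n' ω).1]
    exact (hYbd n' ω).2
  intro n hn
  induction n, hn using Nat.le_induction with
  | base =>
    rw [Finset.Ico_self, Finset.prod_empty]
    have hle1 : ∫ ω in Gset n0, ((B n0 i ω : ℝ))⁻¹ ∂μ ≤ ∫ ω in Gset n0, (1:ℝ) ∂μ := by
      refine setIntegral_mono_ae_restrict ((hYint n0).integrableOn)
        (integrable_const 1).integrableOn ?_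
      exact ae_restrict_of_ae (ae_of_all _ fun ω => (hYbd n0 ω).2)
    have hle2 : ∫ ω in Gset n0, (1:ℝ) ∂μ ≤ 1 := by
      rw [setIntegral_const, smul_eq_mul, mul_one]
      have h3 : μ (Gset n0) ≤ 1 := by
        have := measure_mono (μ := μ) (Set.subset_univ (Gset n0))
        rwa [measure_univ] at this
      have h4 := ENNReal.toReal_mono ENNReal.one_ne_top h3
      simpa using h4
    exact hle1.trans hle2
  | succ n hn ih =>
    have hGmn := hGm n hn
    have hGA : MeasurableSet (Gset n) := hFle n _ hGmn
    have hsub : Gset (n+1) ⊆ Gset n := fun ω hω =>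
      ⟨hω.1, fun k h1 h2 => hω.2 k h1 (h2.trans (Nat.le_succ n))⟩
    have h1 : ∫ ω in Gset (n+1), ((B (n+1) i ω : ℝ))⁻¹ ∂μ
        ≤ ∫ ω in Gset n, ((B (n+1) i ω : ℝ))⁻¹ ∂μ := by
      refine setIntegral_mono_set ((hYint (n+1)).integrableOn)
        (ae_restrict_of_ae (ae_of_all _ fun ω => (hYbd (n+1) ω).1))
        (HasSubset.Subset.eventuallyLE hsub)
    have h2 : ∫ ω in Gset n, ((B (n+1) i ω : ℝ))⁻¹ ∂μ
        = ∫ ω in Gset n, (μ[(fun ω' => ((B (n+1) i ω' : ℝ))⁻¹)|ℱ n]) ω ∂μ :=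
      (setIntegral_condExp (hFle n) (hYint (n+1)) hGmn).symm
    have hdrift := urn_drift G N hN μ choice hmeas hmem B hB1 hBrec ℱ hFle hBF hlaw i n
    have h3 : ∫ ω in Gset n, (μ[(fun ω' => ((B (n+1) i ω' : ℝ))⁻¹)|ℱ n]) ω ∂μ
        ≤ ∫ ω in Gset n, (1 - ρ n) * ((B n i ω : ℝ))⁻¹ ∂μ := by
      refine setIntegral_mono_ae_restrict (integrable_condExp.integrableOn)
        (((hYint n).const_mul _).integrableOn) ?_
      rw [Filter.EventuallyLE, ae_restrict_iff' hGA]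
      filter_upwards [hdrift] with ω hd hmemG
      have hb1 : (1:ℝ) ≤ (B n i ω : ℝ) := by exact_mod_cast hB1 n i ω
      have hb0 : (0:ℝ) < (B n i ω : ℝ) := lt_of_lt_of_le zero_lt_one hb1
      have hbN : (0:ℝ) < (B n i ω : ℝ) + N := by positivity
      have hK0 : (0:ℝ) < (K:ℝ) := by exact_mod_cast hK
      have hKN : (0:ℝ) < (K:ℝ) + N := by positivity
      have hKb : (K:ℝ) ≤ (B n i ω : ℝ) := by
        have h5 : K ≤ B n0 i ω := hmemG.1
        have h6 : B n0 i ω ≤ B n i ω := hBmono i ω hn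
        exact_mod_cast h5.trans h6
      have hS' : Lk n ≤ ∑ e ∈ G.edgeFinset.filter (fun e => i ∈ e),
          (pairSum (fun j => (B n j ω : ℝ)) e)⁻¹ := hmemG.2 n hn le_rfl
      have hκ : (K:ℝ)/((K:ℝ)+N) ≤ (B n i ω : ℝ)/((B n i ω : ℝ)+N) := by
        rw [div_le_div_iff₀ hKN hbN]
        nlinarith [Nat.cast_nonneg (α := ℝ) N]
      have hρle : ρ n ≤ ((B n i ω : ℝ)/((B n i ω : ℝ)+N)) *
          (∑ e ∈ G.edgeFinset.filter (fun e => i ∈ e),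
            (pairSum (fun j => (B n j ω : ℝ)) e)⁻¹) := by
        rw [hρ]
        exact mul_le_mul hκ hS' (hLk0 n) (div_nonneg hb0.le hbN.le)
      have hfinal : ((B n i ω : ℝ))⁻¹ - (∑ e ∈ G.edgeFinset.filter (fun e => i ∈ e),
            (pairSum (fun j => (B n j ω : ℝ)) e)⁻¹) / ((B n i ω : ℝ) + N)
          ≤ (1 - ρ n) * ((B n i ω : ℝ))⁻¹ := by
        have heq : ((B n i ω : ℝ)/((B n i ω : ℝ)+N)) *
            (∑ e ∈ G.edgeFinset.filter (fun e => i ∈ e),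
              (pairSum (fun j => (B n j ω : ℝ)) e)⁻¹) * ((B n i ω : ℝ))⁻¹
            = (∑ e ∈ G.edgeFinset.filter (fun e => i ∈ e),
              (pairSum (fun j => (B n j ω : ℝ)) e)⁻¹) / ((B n i ω : ℝ) + N) := by
          field_simp
        have h7 : ρ n * ((B n i ω : ℝ))⁻¹ ≤ (∑ e ∈ G.edgeFinset.filter (fun e => i ∈ e),
            (pairSum (fun j => (B n j ω : ℝ)) e)⁻¹) / ((B n i ω : ℝ) + N) := by
          rw [← heq]
          exact mul_le_mul_of_nonneg_right hρle (by positivity)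
        nlinarith [h7]
      exact hd.trans hfinal
    have h4 : ∫ ω in Gset n, (1 - ρ n) * ((B n i ω : ℝ))⁻¹ ∂μ
        = (1 - ρ n) * ∫ ω in Gset n, ((B n i ω : ℝ))⁻¹ ∂μ := by
      exact integral_const_mul _ _
    have hρcap : 0 ≤ 1 - ρ n := by
      have := hcap n hn
      rw [hρ]
      linarith
    have h5 : (1 - ρ n) * ∫ ω in Gset n, ((B n i ω : ℝ))⁻¹ ∂μ
        ≤ (1 - ρ n) * ∏ k ∈ Finset.Ico n0 n, (1 - ρ k) :=
      mul_le_mul_of_nonneg_left ih hρcap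
    rw [Finset.prod_Ico_succ_top hn]
    calc ∫ ω in Gset (n+1), ((B (n+1) i ω : ℝ))⁻¹ ∂μ
        ≤ ∫ ω in Gset n, ((B (n+1) i ω : ℝ))⁻¹ ∂μ := h1
      _ = ∫ ω in Gset n, (μ[(fun ω' => ((B (n+1) i ω' : ℝ))⁻¹)|ℱ n]) ω ∂μ := h2
      _ ≤ ∫ ω in Gset n, (1 - ρ n) * ((B n i ω : ℝ))⁻¹ ∂μ := h3
      _ = (1 - ρ n) * ∫ ω in Gset n, ((B n i ω : ℝ))⁻¹ ∂μ := h4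
      _ ≤ (1 - ρ n) * ∏ k ∈ Finset.Ico n0 n, (1 - ρ k) := h5
      _ = (∏ k ∈ Finset.Ico n0 n, (1 - ρ k)) * (1 - ρ n) := mul_comm _ _

lemma aux_prod_le_exp (s : Finset ℕ) (ρ : ℕ → ℝ) (h0 : ∀ k ∈ s, 0 ≤ ρ k)
    (h1 : ∀ k ∈ s, ρ k ≤ 1) :
    ∏ k ∈ s, (1 - ρ k) ≤ Real.exp (-∑ k ∈ s, ρ k) := by
  have : Real.exp (-∑ k ∈ s, ρ k) = ∏ k ∈ s, Real.exp (-ρ k) := by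
    rw [← Real.exp_sum]; congr 1; rw [Finset.sum_neg_distrib]
  rw [this]
  refine Finset.prod_le_prod (fun k hk => by linarith [h1 k hk]) (fun k hk => ?_)
  have := Real.add_one_le_exp (-ρ k); linarith

lemma aux_log_sum (N0 N : ℕ) (hN : 1 ≤ N) (hN0 : 1 ≤ N0) (n0 n : ℕ) (h : n0 ≤ n) :
    Real.log ((N0 : ℝ) + n * N) - Real.log ((N0 : ℝ) + n0 * N)
      ≤ ∑ k ∈ Finset.Ico n0 n, (N : ℝ) / ((N0 : ℝ) + k * N) := by
  induction n, h using Nat.le_induction with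
  | base => simp
  | succ n hn ih =>
    have hpos : ∀ k : ℕ, (0:ℝ) < (N0 : ℝ) + k * N := fun k => by
      have : (1:ℝ) ≤ N0 := by exact_mod_cast hN0
      positivity
    rw [Finset.sum_Ico_succ_top hn]
    have hstep : Real.log ((N0 : ℝ) + (n+1) * N) - Real.log ((N0 : ℝ) + n * N)
        ≤ (N : ℝ) / ((N0 : ℝ) + n * N) := by
      rw [← Real.log_div (by positivity) (ne_of_gt (hpos n))]
      have h3 : ((N0 : ℝ) + (n+1) * N) / ((N0 : ℝ) + n * N) - 1
          = (N : ℝ) / ((N0 : ℝ) + n * N) := by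
        field_simp; ring
      have := Real.log_le_sub_one_of_pos
        (show (0:ℝ) < ((N0 : ℝ) + (n+1) * N) / ((N0 : ℝ) + n * N) by positivity)
      rw [h3] at this
      exact this
    push_cast
    push_cast at ih hstep
    linarith

lemma aux_mono_bdd (b : ℕ → ℕ) (hb : Monotone b) (K : ℕ) (hK : ∀ n, b n ≤ K) :
    ∃ n1, ∀ k, n1 ≤ k → b k = b n1 := by
  have hne : (Set.range b).Nonempty := ⟨b 0, 0, rfl⟩
  have hbdd : BddAbove (Set.range b) := ⟨K, by rintro _ ⟨n, rfl⟩; exact hK n⟩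
  obtain ⟨n1, hn1⟩ := Nat.sSup_mem hne hbdd
  refine ⟨n1, fun k hk => le_antisymm ?_ (hb hk)⟩
  rw [hn1]
  exact le_csSup hbdd ⟨k, rfl⟩


lemma urn_meas
    {m : ℕ} (G : SimpleGraph (Fin m)) [DecidableRel G.Adj]
    {Ω : Type} [inst : MeasurableSpace Ω]
    (choice : ℕ → Sym2 (Fin m) → Ω → Fin m)
    (hmeas : ∀ n e, Measurable (choice n e))
    (ℱ : ℕ → MeasurableSpace Ω)
    (hℱ : ∀ n, ℱ n = ⨆ (k : ℕ) (_ : k ≤ n) (e : Sym2 (Fin m)) (_ : e ∈ G.edgeFinset),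
        MeasurableSpace.comap (choice k e) ⊤) :
    (∀ n, ℱ n ≤ inst) ∧ Monotone ℱ ∧
      (∀ (k n : ℕ), k ≤ n → ∀ e ∈ G.edgeFinset, Measurable[ℱ n] (choice k e)) := by
  refine ⟨?_, ?_, ?_⟩
  · intro n
    rw [hℱ n]
    refine iSup_le fun k => iSup_le fun _ => iSup_le fun e => iSup_le fun _ => ?_
    exact measurable_iff_comap_le.mp (hmeas k e)
  · intro a b hab
    rw [hℱ a, hℱ b]
    refine iSup_le fun k => iSup_le fun hk => ?_
    exact le_iSup_of_le k (le_iSup_of_le (hk.trans hab) le_rfl)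
  · intro k n hk e he
    rw [measurable_iff_comap_le, hℱ n]
    exact le_iSup_of_le k (le_iSup_of_le hk (le_iSup_of_le e (le_iSup_of_le he le_rfl)))

lemma urn_BF
    {m : ℕ} (G : SimpleGraph (Fin m)) [DecidableRel G.Adj]
    {Ω : Type} [inst : MeasurableSpace Ω] (hΩ : Nonempty Ω)
    (choice : ℕ → Sym2 (Fin m) → Ω → Fin m)
    (B : ℕ → Fin m → Ω → ℕ)
    (hB0det : ∀ i ω ω', B 0 i ω = B 0 i ω')
    (hBrec : ∀ n i ω, B (n + 1) i ω
      = B n i ω + (G.edgeFinset.filter fun e => choice (n + 1) e ω = i).card)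
    (ℱ : ℕ → MeasurableSpace Ω)
    (hFmono : Monotone ℱ)
    (hchoiceF : ∀ (k n : ℕ), k ≤ n → ∀ e ∈ G.edgeFinset, Measurable[ℱ n] (choice k e)) :
    ∀ n j, Measurable[ℱ n] (fun ω => B n j ω) := by
  intro n
  induction n with
  | zero =>
    intro j
    obtain ⟨ω0⟩ := hΩ
    have : (fun ω => B 0 j ω) = fun _ => B 0 j ω0 := funext fun ω => hB0det j ω ω0
    rw [this]
    exact measurable_const
  | succ n ih =>
    intro j
    have heq : (fun ω => B (n+1) j ω) = fun ω => B n j ω +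
        ∑ e ∈ G.edgeFinset, (if choice (n+1) e ω = j then 1 else 0) := by
      funext ω
      rw [hBrec n j ω, Finset.card_filter]
    rw [heq]
    refine Measurable.add ((ih j).mono (hFmono (Nat.le_succ n)) le_rfl) ?_
    refine Finset.measurable_sum _ fun e he => ?_
    exact (measurable_from_top (f := fun v : Fin m => if v = j then (1:ℕ) else 0)).comp
      (hchoiceF (n+1) (n+1) le_rfl e he)

lemma pairSum_scale {m : ℕ} (r : ℝ) (v : Fin m → ℝ) (e : Sym2 (Fin m)) :
    pairSum (fun j => r * v j) e = r * pairSum v e := by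
  induction e using Sym2.inductionOn with
  | hf a b => rw [pairSum_mk, pairSum_mk, mul_add]

lemma urn_bij {m : ℕ} (G : SimpleGraph (Fin m)) [DecidableRel G.Adj] (i : Fin m)
    (v : Fin m → ℝ) :
    ∑ e ∈ G.edgeFinset.filter (fun e => i ∈ e), (pairSum v e)⁻¹
      = ∑ j ∈ G.neighborFinset i, (v i + v j)⁻¹ := by
  classical
  refine Finset.sum_bij' (i := fun e he => Sym2.Mem.other' (Finset.mem_filter.mp he).2)
    (j := fun b _ => s(i, b)) ?_ ?_ ?_ ?_ ?_
  · -- hi : other' ∈ neighborFinset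
    intro e he
    obtain ⟨heE, hie⟩ := Finset.mem_filter.mp he
    rw [SimpleGraph.mem_neighborFinset, ← SimpleGraph.mem_edgeSet, Sym2.other_spec' hie]
    exact SimpleGraph.mem_edgeFinset.mp heE
  · -- hj : s(i,b) ∈ filter
    intro b hb
    rw [Finset.mem_filter]
    refine ⟨SimpleGraph.mem_edgeFinset.mpr ?_, Sym2.mem_mk_left i b⟩
    exact (SimpleGraph.mem_neighborFinset G i b).mp hb
  · -- left_inv : s(i, other' hie) = e
    intro e he
    exact Sym2.other_spec' (Finset.mem_filter.mp he).2
  · -- right_inv : other' (i ∈ s(i,b)) = b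
    intro b hb
    have h := Sym2.other_spec' (Sym2.mem_mk_left i b : i ∈ s(i, b))
    exact Sym2.congr_right.mp h
  · -- values
    intro e he
    have h := Sym2.other_spec' (Finset.mem_filter.mp he).2
    conv_lhs => rw [← h]
    rw [pairSum_mk]

lemma aux_ytimes {y b : ℝ} (hy : 0 < y) :
    y * Real.exp (-b * Real.log y) = Real.exp ((1-b) * Real.log y) := by
  nth_rewrite 1 [← Real.exp_log hy]
  rw [← Real.exp_add]
  congr 1
  ring


set_option maxHeartbeats 2000000 in
/-- If `w ∈ Δ` is an unstable equilibrium, i.e. an equilibrium such that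
`w_i = 0` and `∂L/∂v_i(w) > 0` for some `i`, then the graph-based Pólya urn converges to `w`
with probability zero. -/
theorem polya_urn_nonconvergence_to_unstable
    {m : ℕ} (hm : 2 ≤ m) (G : SimpleGraph (Fin m)) [DecidableRel G.Adj]
    (hconn : G.Connected)
    (N : ℕ) (hN : N = G.edgeFinset.card)
    (c : ℝ) (hc0 : 0 < c) (hc1 : c < 1 / (N : ℝ))
    {Ω : Type} [MeasurableSpace Ω] (μ : Measure Ω) [IsProbabilityMeasure μ]
    -- `choice n e` is the endpoint of edge `e` receiving the ball at step `n`
    (choice : ℕ → Sym2 (Fin m) → Ω → Fin m)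
    (hmeas : ∀ n e, Measurable (choice n e))
    (hmem : ∀ n e ω, e ∈ G.edgeFinset → choice n e ω ∈ e)
    -- `B n i` is the number of balls in bin `i` after step `n`
    (B : ℕ → Fin m → Ω → ℕ)
    (hB0pos : ∀ i ω, 1 ≤ B 0 i ω)
    (hB0det : ∀ i ω ω', B 0 i ω = B 0 i ω')
    (hBrec : ∀ n i ω, B (n + 1) i ω
      = B n i ω + (G.edgeFinset.filter fun e => choice (n + 1) e ω = i).card)
    -- the filtration generated by the process up to step `n`
    (ℱ : ℕ → MeasurableSpace Ω)
    (hℱ : ∀ n, ℱ n = ⨆ (k : ℕ) (_ : k ≤ n) (e : Sym2 (Fin m)) (_ : e ∈ G.edgeFinset),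
        MeasurableSpace.comap (choice k e) ⊤)
    -- conditionally on the past, the balls on distinct edges are placed independently, the one
    -- on edge `{i,j}` going to bin `i` with probability `B_i(n)/(B_i(n)+B_j(n))`
    (hlaw : ∀ (n : ℕ) (f : Sym2 (Fin m) → Fin m), (∀ e ∈ G.edgeFinset, f e ∈ e) →
      μ[Set.indicator {ω | ∀ e ∈ G.edgeFinset, choice (n + 1) e ω = f e} (fun _ => (1 : ℝ)) | ℱ n]
        =ᵐ[μ] fun ω => ∏ e ∈ G.edgeFinset,
          (B n (f e) ω : ℝ) / pairSum (fun i => (B n i ω : ℝ)) e)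
    (N0 : ℕ) (hN0 : ∀ ω, N0 = ∑ i, B 0 i ω)
    -- the proportion vector
    (x : ℕ → Ω → Fin m → ℝ)
    (hx : ∀ n ω i, x n ω i = (B n i ω : ℝ) / ((N0 : ℝ) + (n : ℝ) * (N : ℝ))) :
    ∀ w : Fin m → ℝ, w ∈ urnDomain G c → (∀ i, w i * dLyap G N i w = 0) →
      (∃ i, w i = 0 ∧ 0 < dLyap G N i w) →
      μ {ω | Tendsto (fun n => x n ω) atTop (nhds w)} = 0 := by
  intro w hw _heqw hunst
  obtain ⟨i, hwi, hδ0⟩ := hunst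
  classical
  have hΩ : Nonempty Ω := by
    by_contra h
    rw [not_nonempty_iff] at h
    have h1 : μ Set.univ = 1 := measure_univ
    rw [Set.univ_eq_empty_iff.mpr h] at h1
    simp at h1
  obtain ⟨hFle, hFmono, hchoiceF⟩ := urn_meas G choice hmeas ℱ hℱ
  have hBF := urn_BF G hΩ choice B hB0det hBrec ℱ hFmono hchoiceF
  have hB1 : ∀ n j ω, 1 ≤ B n j ω := by
    intro n j ω
    induction n with
    | zero => exact hB0pos j ω
    | succ n ih => rw [hBrec n j ω]; exact ih.trans (Nat.le_add_right _ _)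
  have hBmono : ∀ j ω, Monotone fun n => B n j ω := by
    intro j ω
    refine monotone_nat_of_le_succ fun n => ?_
    rw [hBrec n j ω]
    exact Nat.le_add_right _ _
  have hNpos : 0 < N := by
    rw [hN, Finset.card_pos]
    have h01 : (⟨0, by omega⟩ : Fin m) ≠ ⟨1, by omega⟩ := by
      intro h
      simpa using congrArg Fin.val h
    obtain ⟨p⟩ := hconn.preconnected ⟨0, by omega⟩ ⟨1, by omega⟩
    cases p with
    | cons h _ => exact ⟨_, SimpleGraph.mem_edgeFinset.mpr ((SimpleGraph.mem_edgeSet G).mpr h)⟩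
  have hNr : (1:ℝ) ≤ (N:ℝ) := by exact_mod_cast hNpos
  have hN0pos : 1 ≤ N0 := by
    obtain ⟨ω0⟩ := hΩ
    rw [hN0 ω0]
    calc 1 ≤ B 0 i ω0 := hB0pos i ω0
      _ ≤ ∑ j, B 0 j ω0 := Finset.single_le_sum (f := fun j => B 0 j ω0)
            (fun j _ => Nat.zero_le _) (Finset.mem_univ i)
  have hBsum : ∀ n ω, ∑ j, B n j ω = N0 + n * N := by
    intro n ω
    induction n with
    | zero => simp [← hN0 ω]
    | succ n ih =>
      have hcard : ∑ j : Fin m, (G.edgeFinset.filter fun e => choice (n+1) e ω = j).card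
          = G.edgeFinset.card :=
        (Finset.card_eq_sum_card_fiberwise (fun e _ => Finset.mem_univ _)).symm
      calc ∑ j, B (n+1) j ω
          = ∑ j, (B n j ω + (G.edgeFinset.filter fun e => choice (n+1) e ω = j).card) :=
            Finset.sum_congr rfl (fun j _ => hBrec n j ω)
        _ = (∑ j, B n j ω) + ∑ j : Fin m,
              (G.edgeFinset.filter fun e => choice (n+1) e ω = j).card :=
            Finset.sum_add_distrib
        _ = N0 + n * N + N := by rw [ih, hcard, ← hN]
        _ = N0 + (n+1) * N := by ring
  have hBle : ∀ n j ω, B n j ω ≤ N0 + n * N := by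
    intro n j ω
    rw [← hBsum n ω]
    exact Finset.single_le_sum (f := fun j' => B n j' ω)
      (fun j' _ => Nat.zero_le _) (Finset.mem_univ j)
  have hapos : ∀ k : ℕ, (0:ℝ) < (N0:ℝ) + (k:ℝ) * (N:ℝ) := by
    intro k
    have h1 : (1:ℝ) ≤ (N0:ℝ) := by exact_mod_cast hN0pos
    positivity
  set δ : ℝ := dLyap G N i w with hδdef
  have hSw : ∑ j ∈ G.neighborFinset i, (w i + w j)⁻¹ = (N:ℝ) * (1 + δ) := by
    have h1 : δ = -1 + (1 / (N : ℝ)) * ∑ j ∈ G.neighborFinset i, 1 / (w i + w j) := hδdef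
    have h2 : ∑ j ∈ G.neighborFinset i, 1 / (w i + w j)
        = ∑ j ∈ G.neighborFinset i, (w i + w j)⁻¹ :=
      Finset.sum_congr rfl fun j _ => one_div _
    rw [h2] at h1
    have hNne : (N:ℝ) ≠ 0 := by positivity
    field_simp at h1
    linarith
  set L : ℝ := (N:ℝ) * (1 + δ/2) with hLdef
  have hLpos : 0 < L := by
    have h1 : (0:ℝ) < 1 + δ/2 := by linarith
    have h2 : (0:ℝ) < (N:ℝ) := by positivity
    exact mul_pos h2 h1
  set M : ℕ := ⌈(1:ℝ) + δ⌉₊ with hMdef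
  have hMcap : ∀ k, M ≤ k → L ≤ (N0:ℝ) + (k:ℝ) * (N:ℝ) := by
    intro k hk
    have h1 : (1:ℝ) + δ ≤ (M:ℝ) := Nat.le_ceil _
    have h2 : (M:ℝ) ≤ (k:ℝ) := by exact_mod_cast hk
    have h3 : (0:ℝ) ≤ (N0:ℝ) := by positivity
    have h4 : L = (N:ℝ) * (1 + δ/2) := hLdef
    nlinarith
  set K : ℕ := max 1 (⌈(4:ℝ) * (N:ℝ) * (1 + δ/4) / δ⌉₊) with hKdef
  have hK1 : 1 ≤ K := le_max_left _ _
  have hβ : (1:ℝ) + δ/4 ≤ (K:ℝ)/((K:ℝ)+(N:ℝ)) * (1 + δ/2) := by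
    have hKge : (4:ℝ) * (N:ℝ) * (1 + δ/4) / δ ≤ (K:ℝ) := by
      have h1 := Nat.le_ceil ((4:ℝ) * (N:ℝ) * (1 + δ/4) / δ)
      have h2 : ((⌈(4:ℝ) * (N:ℝ) * (1 + δ/4) / δ⌉₊ : ℕ) : ℝ) ≤ (K:ℝ) := by
        rw [hKdef]
        exact_mod_cast Nat.cast_le.mpr (le_max_right _ _)
      exact h1.trans h2
    have hK0 : (0:ℝ) < (K:ℝ) := by exact_mod_cast hK1
    have hKN : (0:ℝ) < (K:ℝ) + (N:ℝ) := by positivity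
    rw [div_mul_eq_mul_div, le_div_iff₀ hKN]
    have h5 : 4 * (N:ℝ) * (1 + δ/4) ≤ (K:ℝ) * δ := by
      rw [div_le_iff₀ hδ0] at hKge
      linarith
    nlinarith
  set Scond : ℕ → Ω → Prop := fun k ω =>
    L / ((N0:ℝ) + (k:ℝ) * (N:ℝ)) ≤ ∑ e ∈ G.edgeFinset.filter (fun e => i ∈ e),
      (pairSum (fun j => (B k j ω : ℝ)) e)⁻¹ with hSconddef
  have hSx : ∀ k ω, Scond k ω ↔ L ≤ ∑ j ∈ G.neighborFinset i, (x k ω i + x k ω j)⁻¹ := by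
    intro k ω
    have hB2x : (fun j => (B k j ω : ℝ)) = fun j => ((N0:ℝ) + (k:ℝ) * (N:ℝ)) * x k ω j := by
      funext j
      rw [hx k ω j]
      field_simp
    have h2 : ∑ e ∈ G.edgeFinset.filter (fun e => i ∈ e),
        (pairSum (fun j => (B k j ω : ℝ)) e)⁻¹
        = ((N0:ℝ) + (k:ℝ) * (N:ℝ))⁻¹ * ∑ j ∈ G.neighborFinset i, (x k ω i + x k ω j)⁻¹ := by
      rw [← urn_bij G i (x k ω), Finset.mul_sum]
      refine Finset.sum_congr rfl fun e he => ?_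
      rw [hB2x, pairSum_scale, mul_inv]
    rw [hSconddef]
    simp only
    rw [h2, div_eq_inv_mul]
    exact mul_le_mul_iff_of_pos_left (inv_pos.mpr (hapos k))
  -- integrability of 1/B
  have hYmeas : ∀ n', Measurable (fun ω => ((B n' i ω : ℝ))⁻¹) :=
    fun n' => ((measurable_from_top (f := (Nat.cast : ℕ → ℝ))).comp
      ((hBF n' i).mono (hFle n') le_rfl)).inv
  have hYbd : ∀ n' (ω : Ω), 0 ≤ ((B n' i ω : ℝ))⁻¹ ∧ ((B n' i ω : ℝ))⁻¹ ≤ 1 := by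
    intro n' ω
    have h1 : (1:ℝ) ≤ (B n' i ω : ℝ) := by exact_mod_cast hB1 n' i ω
    constructor
    · positivity
    · rw [inv_le_one_iff₀]; right; exact h1
  have hYint : ∀ n', Integrable (fun ω => ((B n' i ω : ℝ))⁻¹) μ := by
    intro n'
    refine Integrable.mono' (integrable_const (1:ℝ)) (hYmeas n').aestronglyMeasurable
      (ae_of_all _ fun ω => ?_)
    rw [Real.norm_eq_abs, abs_of_nonneg (hYbd n' ω).1]
    exact (hYbd n' ω).2
  -- cap for urn_key
  have hcapκ : ∀ (K' : ℕ), 1 ≤ K' → ∀ k, M ≤ k →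
      (K':ℝ)/((K':ℝ)+(N:ℝ)) * (L / ((N0:ℝ) + (k:ℝ) * (N:ℝ))) ≤ 1 := by
    intro K' hK' k hk
    have hK'0 : (0:ℝ) < (K':ℝ) := by exact_mod_cast hK'
    have h1 : (K':ℝ)/((K':ℝ)+(N:ℝ)) ≤ 1 := by
      rw [div_le_one (by positivity)]
      linarith [hNr]
    have h2 : L / ((N0:ℝ) + (k:ℝ) * (N:ℝ)) ≤ 1 := by
      rw [div_le_one (hapos k)]
      exact hMcap k hk
    have h3 : (0:ℝ) ≤ L / ((N0:ℝ) + (k:ℝ) * (N:ℝ)) := le_of_lt (div_pos hLpos (hapos k))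
    nlinarith
  -- log-type tendsto facts
  have hatop : Tendsto (fun n : ℕ => (N0:ℝ) + (n:ℝ) * (N:ℝ)) atTop atTop := by
    have hN0' : (0:ℝ) < (N:ℝ) := by positivity
    exact tendsto_atTop_add_const_left _ _
      (Tendsto.atTop_mul_const hN0' tendsto_natCast_atTop_atTop)
  have hlogtop : Tendsto (fun n : ℕ => Real.log ((N0:ℝ) + (n:ℝ) * (N:ℝ))) atTop atTop :=
    Real.tendsto_log_atTop.comp hatop
  -- generic product bound
  have hprodbd : ∀ (K' : ℕ), 1 ≤ K' → ∀ (n0 : ℕ), M ≤ n0 → ∀ n, n0 ≤ n →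
      ∏ k ∈ Finset.Ico n0 n, (1 - (K':ℝ)/((K':ℝ)+(N:ℝ)) * (L / ((N0:ℝ) + (k:ℝ) * (N:ℝ))))
        ≤ Real.exp ((K':ℝ)/((K':ℝ)+(N:ℝ)) * (1 + δ/2) * Real.log ((N0:ℝ) + (n0:ℝ) * (N:ℝ)))
          * Real.exp (-((K':ℝ)/((K':ℝ)+(N:ℝ)) * (1 + δ/2))
            * Real.log ((N0:ℝ) + (n:ℝ) * (N:ℝ))) := by
    intro K' hK' n0 hn0 n hn
    have hK'0 : (0:ℝ) < (K':ℝ) := by exact_mod_cast hK'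
    have hκ0 : (0:ℝ) ≤ (K':ℝ)/((K':ℝ)+(N:ℝ)) := by positivity
    have hβ'0 : (0:ℝ) ≤ (K':ℝ)/((K':ℝ)+(N:ℝ)) * (1 + δ/2) := by
      have : (0:ℝ) < 1 + δ/2 := by linarith
      positivity
    have h1 := aux_prod_le_exp (Finset.Ico n0 n)
      (fun k => (K':ℝ)/((K':ℝ)+(N:ℝ)) * (L / ((N0:ℝ) + (k:ℝ) * (N:ℝ))))
      (fun k _ => mul_nonneg hκ0 (le_of_lt (div_pos hLpos (hapos k))))
      (fun k hk => hcapκ K' hK' k (hn0.trans (Finset.mem_Ico.mp hk).1))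
    have h2 : ∑ k ∈ Finset.Ico n0 n,
        (K':ℝ)/((K':ℝ)+(N:ℝ)) * (L / ((N0:ℝ) + (k:ℝ) * (N:ℝ)))
        = (K':ℝ)/((K':ℝ)+(N:ℝ)) * (1 + δ/2)
          * ∑ k ∈ Finset.Ico n0 n, (N:ℝ) / ((N0:ℝ) + (k:ℝ) * (N:ℝ)) := by
      rw [Finset.mul_sum]
      refine Finset.sum_congr rfl fun k _ => ?_
      rw [hLdef]
      ring
    have h3 := aux_log_sum N0 N hNpos hN0pos n0 n hn
    have h4 : (K':ℝ)/((K':ℝ)+(N:ℝ)) * (1 + δ/2)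
        * (Real.log ((N0:ℝ) + (n:ℝ) * (N:ℝ)) - Real.log ((N0:ℝ) + (n0:ℝ) * (N:ℝ)))
        ≤ ∑ k ∈ Finset.Ico n0 n,
            (K':ℝ)/((K':ℝ)+(N:ℝ)) * (L / ((N0:ℝ) + (k:ℝ) * (N:ℝ))) := by
      rw [h2]
      exact mul_le_mul_of_nonneg_left h3 hβ'0
    refine h1.trans ?_
    rw [← Real.exp_add]
    refine Real.exp_le_exp.mpr ?_
    nlinarith [h4]
  -- the two families of null sets
  have hSmeasAmb : ∀ k, Measurable (fun ω => ∑ e ∈ G.edgeFinset.filter (fun e => i ∈ e),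
      (pairSum (fun j => (B k j ω : ℝ)) e)⁻¹) := by
    intro k
    refine Finset.measurable_sum _ fun e _ => Measurable.inv ?_
    induction e using Sym2.inductionOn with
    | hf a b =>
      have heq : (fun ω => pairSum (fun j => (B k j ω : ℝ)) s(a,b))
          = fun ω => (B k a ω : ℝ) + (B k b ω : ℝ) := funext fun ω => pairSum_mk _ a b
      rw [heq]
      exact ((measurable_from_top (f := (Nat.cast : ℕ → ℝ))).comp
          ((hBF k a).mono (hFle k) le_rfl)).add
        ((measurable_from_top (f := (Nat.cast : ℕ → ℝ))).comp
          ((hBF k b).mono (hFle k) le_rfl))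
  have hTA : ∀ n1 : ℕ,
      μ {ω | K ≤ B (M + n1) i ω ∧ ∀ k, M + n1 ≤ k → Scond k ω} = 0 := by
    intro n1
    set n0 : ℕ := M + n1 with hn0def
    have hn0M : M ≤ n0 := Nat.le_add_right _ _
    set T : Set Ω := {ω | K ≤ B n0 i ω ∧ ∀ k, n0 ≤ k → Scond k ω} with hTdef
    set E1 : ℝ := Real.exp ((K:ℝ)/((K:ℝ)+(N:ℝ)) * (1 + δ/2)
      * Real.log ((N0:ℝ) + (n0:ℝ) * (N:ℝ))) with hE1def
    have hkey := urn_key G N hN μ choice hmeas hmem B hB1 hBrec ℱ hFle hFmono hBF hlaw i n0 K hK1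
      (fun k => L / ((N0:ℝ) + (k:ℝ) * (N:ℝ)))
      (fun k => le_of_lt (div_pos hLpos (hapos k)))
      (fun k hk => hcapκ K hK1 k (hn0M.trans hk))
    have hbound : ∀ n, n0 ≤ n → (μ T).toReal ≤
        E1 * Real.exp ((1 - (K:ℝ)/((K:ℝ)+(N:ℝ)) * (1 + δ/2))
          * Real.log ((N0:ℝ) + (n:ℝ) * (N:ℝ))) := by
      intro n hn
      have ha := hapos n
      have hc1 : (μ T).toReal * ((N0:ℝ) + (n:ℝ) * (N:ℝ))⁻¹
          ≤ ∫ ω in T, ((B n i ω : ℝ))⁻¹ ∂μ := by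
        have h0 : ∫ ω in T, ((N0:ℝ) + (n:ℝ) * (N:ℝ))⁻¹ ∂μ
            = (μ T).toReal * ((N0:ℝ) + (n:ℝ) * (N:ℝ))⁻¹ := by
          rw [setIntegral_const, smul_eq_mul]; rfl
        rw [← h0]
        refine integral_mono ((integrable_const _).integrableOn) ((hYint n).integrableOn)
          (fun ω => ?_)
        have hb0 : (0:ℝ) < (B n i ω : ℝ) := by
          have := hB1 n i ω
          exact_mod_cast Nat.lt_of_lt_of_le Nat.zero_lt_one this
        refine inv_anti₀ hb0 ?_
        have h2 := hBle n i ω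
        push_cast
        exact_mod_cast h2
      have hsubG : T ⊆ {ω | K ≤ B n0 i ω ∧ ∀ k, n0 ≤ k → k ≤ n →
          L / ((N0:ℝ) + (k:ℝ) * (N:ℝ)) ≤ ∑ e ∈ G.edgeFinset.filter (fun e => i ∈ e),
            (pairSum (fun j => (B k j ω : ℝ)) e)⁻¹} :=
        fun ω hω => ⟨hω.1, fun k h1 _ => hω.2 k h1⟩
      have hc2 : ∫ ω in T, ((B n i ω : ℝ))⁻¹ ∂μ
          ≤ ∫ ω in {ω | K ≤ B n0 i ω ∧ ∀ k, n0 ≤ k → k ≤ n →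
              L / ((N0:ℝ) + (k:ℝ) * (N:ℝ)) ≤ ∑ e ∈ G.edgeFinset.filter (fun e => i ∈ e),
                (pairSum (fun j => (B k j ω : ℝ)) e)⁻¹}, ((B n i ω : ℝ))⁻¹ ∂μ :=
        setIntegral_mono_set ((hYint n).integrableOn)
          (ae_restrict_of_ae (ae_of_all _ fun ω => (hYbd n ω).1))
          (HasSubset.Subset.eventuallyLE hsubG)
      have hc3 := hkey n hn
      have hc4 := hprodbd K hK1 n0 hn0M n hn
      have h5 := hc1.trans (hc2.trans (hc3.trans hc4))
      have h6 : (μ T).toReal ≤ ((N0:ℝ) + (n:ℝ) * (N:ℝ)) *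
          (E1 * Real.exp (-((K:ℝ)/((K:ℝ)+(N:ℝ)) * (1 + δ/2))
            * Real.log ((N0:ℝ) + (n:ℝ) * (N:ℝ)))) := by
        calc (μ T).toReal
            = (μ T).toReal * ((N0:ℝ) + (n:ℝ) * (N:ℝ))⁻¹ * ((N0:ℝ) + (n:ℝ) * (N:ℝ)) := by
              rw [mul_assoc, inv_mul_cancel₀ (ne_of_gt ha), mul_one]
          _ ≤ (E1 * Real.exp (-((K:ℝ)/((K:ℝ)+(N:ℝ)) * (1 + δ/2))
              * Real.log ((N0:ℝ) + (n:ℝ) * (N:ℝ)))) * ((N0:ℝ) + (n:ℝ) * (N:ℝ)) :=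
              mul_le_mul_of_nonneg_right h5 ha.le
          _ = ((N0:ℝ) + (n:ℝ) * (N:ℝ)) * (E1 * Real.exp (-((K:ℝ)/((K:ℝ)+(N:ℝ)) * (1 + δ/2))
              * Real.log ((N0:ℝ) + (n:ℝ) * (N:ℝ)))) := mul_comm _ _
      refine h6.trans_eq ?_
      rw [show ((N0:ℝ) + (n:ℝ) * (N:ℝ)) * (E1 * Real.exp (-((K:ℝ)/((K:ℝ)+(N:ℝ)) * (1 + δ/2))
          * Real.log ((N0:ℝ) + (n:ℝ) * (N:ℝ))))
          = E1 * (((N0:ℝ) + (n:ℝ) * (N:ℝ)) * Real.exp (-((K:ℝ)/((K:ℝ)+(N:ℝ)) * (1 + δ/2))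
          * Real.log ((N0:ℝ) + (n:ℝ) * (N:ℝ)))) from by ring]
      rw [aux_ytimes ha]
    have hneg : 1 - (K:ℝ)/((K:ℝ)+(N:ℝ)) * (1 + δ/2) < 0 := by linarith [hβ, hδ0]
    have htend0 : Tendsto (fun n : ℕ =>
        E1 * Real.exp ((1 - (K:ℝ)/((K:ℝ)+(N:ℝ)) * (1 + δ/2))
          * Real.log ((N0:ℝ) + (n:ℝ) * (N:ℝ)))) atTop (nhds 0) := by
      have h7 : Tendsto (fun n : ℕ => (1 - (K:ℝ)/((K:ℝ)+(N:ℝ)) * (1 + δ/2))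
          * Real.log ((N0:ℝ) + (n:ℝ) * (N:ℝ))) atTop atBot :=
        hlogtop.const_mul_atTop_of_neg hneg
      have h8 := Real.tendsto_exp_atBot.comp h7
      have h9 := h8.const_mul E1
      rw [mul_zero] at h9
      exact h9
    have hle0 : (μ T).toReal ≤ 0 :=
      ge_of_tendsto htend0 (eventually_atTop.mpr ⟨n0, hbound⟩)
    have h0 : (μ T).toReal = 0 := le_antisymm hle0 ENNReal.toReal_nonneg
    rcases (ENNReal.toReal_eq_zero_iff _).mp h0 with h | h
    · exact h
    · exact absurd h (measure_ne_top μ T)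
  have hTB : ∀ n1 C : ℕ,
      μ {ω | (∀ k, M + n1 ≤ k → Scond k ω) ∧ ∀ k, M + n1 ≤ k → B k i ω = C} = 0 := by
    intro n1 C
    set n0 : ℕ := M + n1 with hn0def
    have hn0M : M ≤ n0 := Nat.le_add_right _ _
    by_cases hC0 : C = 0
    · have hemp : {ω | (∀ k, n0 ≤ k → Scond k ω) ∧ ∀ k, n0 ≤ k → B k i ω = C} = ∅ := by
        ext ω
        simp only [Set.mem_setOf_eq, Set.mem_empty_iff_false, iff_false, not_and]
        intro _ h2
        have h3 := h2 n0 le_rfl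
        have h4 := hB1 n0 i ω
        omega
      rw [hemp]
      exact measure_empty
    have hC1 : 1 ≤ C := Nat.one_le_iff_ne_zero.mpr hC0
    have hCr : (0:ℝ) < (C:ℝ) := by exact_mod_cast Nat.lt_of_lt_of_le Nat.zero_lt_one hC1
    set T : Set Ω := {ω | (∀ k, n0 ≤ k → Scond k ω) ∧ ∀ k, n0 ≤ k → B k i ω = C} with hTdef
    have hTmeas : MeasurableSet T := by
      have hT2 : T = (⋂ k : ℕ, {ω | n0 ≤ k → Scond k ω}) ∩
          ⋂ k : ℕ, {ω | n0 ≤ k → B k i ω = C} := by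
        ext ω
        simp only [hTdef, Set.mem_setOf_eq, Set.mem_inter_iff, Set.mem_iInter]
      rw [hT2]
      refine (MeasurableSet.iInter fun k => ?_).inter (MeasurableSet.iInter fun k => ?_)
      · by_cases hk : n0 ≤ k
        · have heq2 : {ω | n0 ≤ k → Scond k ω} = {ω | Scond k ω} := by
            ext ω; simp [hk]
          rw [heq2]
          exact measurableSet_le measurable_const (hSmeasAmb k)
        · have heq2 : {ω | n0 ≤ k → Scond k ω} = Set.univ := by
            ext ω; simp [hk]
          rw [heq2]
          exact MeasurableSet.univ
      · by_cases hk : n0 ≤ k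
        · have heq2 : {ω | n0 ≤ k → B k i ω = C} = (fun ω => B k i ω) ⁻¹' {C} := by
            ext ω; simp [hk]
          rw [heq2]
          exact ((hBF k i).mono (hFle k) le_rfl) trivial
        · have heq2 : {ω | n0 ≤ k → B k i ω = C} = Set.univ := by
            ext ω; simp [hk]
          rw [heq2]
          exact MeasurableSet.univ
    set E1 : ℝ := Real.exp (((1:ℕ):ℝ)/(((1:ℕ):ℝ)+(N:ℝ)) * (1 + δ/2)
      * Real.log ((N0:ℝ) + (n0:ℝ) * (N:ℝ))) with hE1def
    have hkey := urn_key G N hN μ choice hmeas hmem B hB1 hBrec ℱ hFle hFmono hBF hlaw i n0 1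
      le_rfl (fun k => L / ((N0:ℝ) + (k:ℝ) * (N:ℝ)))
      (fun k => le_of_lt (div_pos hLpos (hapos k)))
      (fun k hk => hcapκ 1 le_rfl k (hn0M.trans hk))
    have hbound : ∀ n, n0 ≤ n → (μ T).toReal ≤
        (C:ℝ) * (E1 * Real.exp (-(((1:ℕ):ℝ)/(((1:ℕ):ℝ)+(N:ℝ)) * (1 + δ/2))
          * Real.log ((N0:ℝ) + (n:ℝ) * (N:ℝ)))) := by
      intro n hn
      have hc1 : (μ T).toReal * ((C:ℝ))⁻¹ ≤ ∫ ω in T, ((B n i ω : ℝ))⁻¹ ∂μ := by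
        have h0 : ∫ ω in T, ((C:ℝ))⁻¹ ∂μ = (μ T).toReal * ((C:ℝ))⁻¹ := by
          rw [setIntegral_const, smul_eq_mul]; rfl
        rw [← h0]
        refine setIntegral_mono_ae_restrict ((integrable_const _).integrableOn)
          ((hYint n).integrableOn) ?_
        rw [Filter.EventuallyLE, ae_restrict_iff' hTmeas]
        refine ae_of_all _ fun ω hω => ?_
        have h2 : B n i ω = C := hω.2 n hn
        rw [h2]
      have hsubG : T ⊆ {ω | 1 ≤ B n0 i ω ∧ ∀ k, n0 ≤ k → k ≤ n →
          L / ((N0:ℝ) + (k:ℝ) * (N:ℝ)) ≤ ∑ e ∈ G.edgeFinset.filter (fun e => i ∈ e),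
            (pairSum (fun j => (B k j ω : ℝ)) e)⁻¹} :=
        fun ω hω => ⟨hB1 n0 i ω, fun k h1 _ => hω.1 k h1⟩
      have hc2 : ∫ ω in T, ((B n i ω : ℝ))⁻¹ ∂μ
          ≤ ∫ ω in {ω | 1 ≤ B n0 i ω ∧ ∀ k, n0 ≤ k → k ≤ n →
              L / ((N0:ℝ) + (k:ℝ) * (N:ℝ)) ≤ ∑ e ∈ G.edgeFinset.filter (fun e => i ∈ e),
                (pairSum (fun j => (B k j ω : ℝ)) e)⁻¹}, ((B n i ω : ℝ))⁻¹ ∂μ :=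
        setIntegral_mono_set ((hYint n).integrableOn)
          (ae_restrict_of_ae (ae_of_all _ fun ω => (hYbd n ω).1))
          (HasSubset.Subset.eventuallyLE hsubG)
      have hc3 := hkey n hn
      have hc4 := hprodbd 1 le_rfl n0 hn0M n hn
      have h5 := hc1.trans (hc2.trans (hc3.trans hc4))
      calc (μ T).toReal
          = (μ T).toReal * ((C:ℝ))⁻¹ * (C:ℝ) := by
            rw [mul_assoc, inv_mul_cancel₀ (ne_of_gt hCr), mul_one]
        _ ≤ (E1 * Real.exp (-(((1:ℕ):ℝ)/(((1:ℕ):ℝ)+(N:ℝ)) * (1 + δ/2))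
            * Real.log ((N0:ℝ) + (n:ℝ) * (N:ℝ)))) * (C:ℝ) :=
            mul_le_mul_of_nonneg_right h5 hCr.le
        _ = (C:ℝ) * (E1 * Real.exp (-(((1:ℕ):ℝ)/(((1:ℕ):ℝ)+(N:ℝ)) * (1 + δ/2))
            * Real.log ((N0:ℝ) + (n:ℝ) * (N:ℝ)))) := mul_comm _ _
    have hneg : -(((1:ℕ):ℝ)/(((1:ℕ):ℝ)+(N:ℝ)) * (1 + δ/2)) < 0 := by
      have h1 : (0:ℝ) < ((1:ℕ):ℝ)/(((1:ℕ):ℝ)+(N:ℝ)) := by positivity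
      have h2 : (0:ℝ) < 1 + δ/2 := by linarith
      nlinarith
    have htend0 : Tendsto (fun n : ℕ =>
        (C:ℝ) * (E1 * Real.exp (-(((1:ℕ):ℝ)/(((1:ℕ):ℝ)+(N:ℝ)) * (1 + δ/2))
          * Real.log ((N0:ℝ) + (n:ℝ) * (N:ℝ))))) atTop (nhds 0) := by
      have h7 : Tendsto (fun n : ℕ => -(((1:ℕ):ℝ)/(((1:ℕ):ℝ)+(N:ℝ)) * (1 + δ/2))
          * Real.log ((N0:ℝ) + (n:ℝ) * (N:ℝ))) atTop atBot :=
        hlogtop.const_mul_atTop_of_neg hneg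
      have h8 := Real.tendsto_exp_atBot.comp h7
      have h9 := (h8.const_mul E1).const_mul (C:ℝ)
      rw [mul_zero, mul_zero] at h9
      exact h9
    have hle0 : (μ T).toReal ≤ 0 :=
      ge_of_tendsto htend0 (eventually_atTop.mpr ⟨n0, hbound⟩)
    have h0 : (μ T).toReal = 0 := le_antisymm hle0 ENNReal.toReal_nonneg
    rcases (ENNReal.toReal_eq_zero_iff _).mp h0 with h | h
    · exact h
    · exact absurd h (measure_ne_top μ T)
  -- decomposition of the convergence event
  have hsub : {ω | Tendsto (fun n => x n ω) atTop (nhds w)} ⊆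
      (⋃ n1 : ℕ, {ω | K ≤ B (M + n1) i ω ∧ ∀ k, M + n1 ≤ k → Scond k ω}) ∪
      (⋃ n1 : ℕ, ⋃ C : ℕ, {ω | (∀ k, M + n1 ≤ k → Scond k ω) ∧
        ∀ k, M + n1 ≤ k → B k i ω = C}) := by
    intro ω hω
    simp only [Set.mem_setOf_eq] at hω
    have htend : Tendsto (fun k => ∑ j ∈ G.neighborFinset i, (x k ω i + x k ω j)⁻¹) atTop
        (nhds (∑ j ∈ G.neighborFinset i, (w i + w j)⁻¹)) := by
      refine tendsto_finset_sum _ fun j hj => ?_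
      have hadj : G.Adj i j := (SimpleGraph.mem_neighborFinset G i j).mp hj
      have hwc : c ≤ w i + w j := hw.2.2 i j hadj
      have hne : w i + w j ≠ 0 := by intro h; rw [h] at hwc; linarith
      have hti : Tendsto (fun k => x k ω i) atTop (nhds (w i)) := tendsto_pi_nhds.mp hω i
      have htj : Tendsto (fun k => x k ω j) atTop (nhds (w j)) := tendsto_pi_nhds.mp hω j
      exact (hti.add htj).inv₀ hne
    have hgt : L < ∑ j ∈ G.neighborFinset i, (w i + w j)⁻¹ := by
      rw [hSw, hLdef]
      have h1 : (0:ℝ) < (N:ℝ) := by positivity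
      exact (mul_lt_mul_iff_right₀ h1).mpr (by linarith)
    have hev : ∀ᶠ k in atTop, L ≤ ∑ j ∈ G.neighborFinset i, (x k ω i + x k ω j)⁻¹ :=
      htend.eventually (eventually_ge_nhds hgt)
    obtain ⟨n0', hn0'⟩ := eventually_atTop.mp hev
    have hScond_ev : ∀ k, n0' ≤ k → Scond k ω := fun k hk => (hSx k ω).mpr (hn0' k hk)
    by_cases hbd : ∃ n2, K ≤ B n2 i ω
    · obtain ⟨n2, hn2⟩ := hbd
      left
      refine Set.mem_iUnion.mpr ⟨n0' + n2, ?_, ?_⟩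
      · exact le_trans hn2 (hBmono i ω (by omega))
      · intro k hk
        exact hScond_ev k (by omega)
    · push_neg at hbd
      obtain ⟨n3, hn3⟩ := aux_mono_bdd (fun k => B k i ω) (hBmono i ω) K (fun k => (hbd k).le)
      right
      refine Set.mem_iUnion.mpr ⟨n0' + n3, Set.mem_iUnion.mpr ⟨B n3 i ω, ?_, ?_⟩⟩
      · intro k hk
        exact hScond_ev k (by omega)
      · intro k hk
        exact hn3 k (by omega)
  refine measure_mono_null hsub ?_
  exact measure_union_null (measure_iUnion_null fun n1 => hTA n1)
    (measure_iUnion_null fun n1 => measure_iUnion_null fun C => hTB n1 C)
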